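/- Let h, w, P : ℝ → ℝ be continuous 2π-periodic functions with h(θ) + k·w(θ)·P(θ) > 0 for all θ (for some real constant k > 0). Suppose P(−θ) = P(θ) and h(−θ) = h(θ) for all θ, P'(θ) > 0 for θ ∈ (0, π), h(θ) > 0 for θ ∈ (0, π), P(θ) > 0 for all θ, and w(−θ) > w(θ) for θ ∈ (0, π). Then χ := ∫_{−π}^{π} w(θ)P'(θ)/(h(θ) + k·w(θ)·P(θ)) dθ < 0. -/
import Mathlib


theorem chi_neg (h w P : ℝ → ℝ) (k : ℝ) (hk : 0 < k)
    (hh : Continuous h) (hw : Continuous w) (hP : ContDiff ℝ 1 P)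
    (hhper : Function.Periodic h (2 * Real.pi))
    (hwper : Function.Periodic w (2 * Real.pi))
    (hPper : Function.Periodic P (2 * Real.pi))
    (hpos : ∀ θ, 0 < h θ + k * w θ * P θ)
    (hPeven : ∀ θ, P (-θ) = P θ) (hheven : ∀ θ, h (-θ) = h θ)
    (hP' : ∀ θ ∈ Set.Ioo 0 Real.pi, 0 < deriv P θ)
    (hhpos : ∀ θ ∈ Set.Ioo 0 Real.pi, 0 < h θ)
    (hPpos : ∀ θ, 0 < P θ)
    (hww : ∀ θ ∈ Set.Ioo 0 Real.pi, w θ < w (-θ)) :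
    (∫ θ in (-Real.pi)..Real.pi,
      w θ * deriv P θ / (h θ + k * w θ * P θ)) < 0 := by
  have hP'cont : Continuous (deriv P) := hP.continuous_deriv le_rfl
  set f : ℝ → ℝ := fun θ => w θ * deriv P θ / (h θ + k * w θ * P θ) with hf
  have hDc : Continuous fun θ => h θ + k * w θ * P θ :=
    hh.add ((continuous_const.mul hw).mul hP.continuous)
  have hfc : Continuous f := by
    apply Continuous.div (by continuity) hDc
    intro θ; exact (hpos θ).ne'
  have hderivneg : ∀ θ, deriv P (-θ) = - deriv P θ := by
    intro θ
    have h1 : (fun x => P (-x)) = P := funext hPeven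
    have h2 : deriv (fun x => P (-x)) θ = -deriv P (-θ) := deriv_comp_neg P θ
    rw [h1] at h2; linarith
  have split : (∫ θ in (-Real.pi)..Real.pi, f θ)
      = (∫ θ in (-Real.pi)..(0:ℝ), f θ) + ∫ θ in (0:ℝ)..Real.pi, f θ :=
    (intervalIntegral.integral_add_adjacent_intervals
      (hfc.intervalIntegrable _ _) (hfc.intervalIntegrable _ _)).symm
  have comp : (∫ θ in (0:ℝ)..Real.pi, f (-θ)) = ∫ θ in (-Real.pi)..(0:ℝ), f θ := by
    have := intervalIntegral.integral_comp_neg (a := (0:ℝ)) (b := Real.pi) f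
    simpa using this
  have sum : (∫ θ in (-Real.pi)..Real.pi, f θ)
      = ∫ θ in (0:ℝ)..Real.pi, (f (-θ) + f θ) := by
    rw [split, ← comp]
    exact (intervalIntegral.integral_add
      ((hfc.comp continuous_neg).intervalIntegrable _ _)
      (hfc.intervalIntegrable _ _)).symm
  have key : ∀ θ ∈ Set.Ioo 0 Real.pi, 0 < -(f (-θ) + f θ) := by
    intro θ hθ
    have hD1 : 0 < h θ + k * w θ * P θ := hpos θ
    have hD2 : 0 < h θ + k * w (-θ) * P θ := by
      have := hpos (-θ); rwa [hheven, hPeven] at this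
    have hp : 0 < deriv P θ := hP' θ hθ
    have hH : 0 < h θ := hhpos θ hθ
    have hwlt : w θ < w (-θ) := hww θ hθ
    have : f (-θ) + f θ
        = w (-θ) * (-deriv P θ) / (h θ + k * w (-θ) * P θ)
          + w θ * deriv P θ / (h θ + k * w θ * P θ) := by
      simp only [hf, hheven, hPeven, hderivneg]
    rw [this]
    rw [neg_pos, div_add_div _ _ hD2.ne' hD1.ne', div_neg_iff]
    right
    constructor
    · nlinarith [mul_pos (mul_pos hp hH) (sub_pos.mpr hwlt)]
    · positivity
  rw [sum, ← neg_pos, ← intervalIntegral.integral_neg]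
  exact intervalIntegral.intervalIntegral_pos_of_pos_on
    (((hfc.comp continuous_neg).add hfc).neg.intervalIntegrable _ _)
    key Real.pi_pos
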